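/- Coordinate-change invariance of the cubic generic-unfolding condition: let Φ_{u,v}(x,y) = (β_{u,v}(x,y), y·γ_{u,v}(x,y)) be a family of C⁴ diffeomorphisms of the plane fixing the x-axis as a set, with Φ_{0,0}(0,0) = (0,0), b := ∂_x β_{0,0}(0,0) ≠ 0, c := γ_{0,0}(0,0) ≠ 0. If the family of graphs y = y_{u,v}(x) (with y_{0,0} having a cubic tangency with the x-axis at 0, i.e. value, first and second derivatives vanish at 0) has coefficients a₁ = ∂_u y, a₂ = ∂_v y, a₃ = ∂_{ux} y, a₄ = ∂_{vx} y at (0,0,0), then the image curves, written as graphs ỹ_{u,v}(x̃) in the new coordinates, satisfy ∂_u ỹ·∂_{vx̃}ỹ - ∂_v ỹ·∂_{ux̃}ỹ = (c²/b)(a₁a₄ - a₂a₃) at the origin. Hence the generic condition a₁a₄ - a₂a₃ ≠ 0 is preserved. -/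

import Mathlib

open Filter Topology

/-- `a₁ = ∂_u f(0,0,0)` for a family `f u v x`. -/
noncomputable def coeffA1 (f : ℝ → ℝ → ℝ → ℝ) : ℝ := deriv (fun u => f u 0 0) 0
/-- `a₂ = ∂_v f(0,0,0)`. -/
noncomputable def coeffA2 (f : ℝ → ℝ → ℝ → ℝ) : ℝ := deriv (fun v => f 0 v 0) 0
/-- `a₃ = ∂_{ux} f(0,0,0)`. -/
noncomputable def coeffA3 (f : ℝ → ℝ → ℝ → ℝ) : ℝ :=
  deriv (fun u => deriv (fun x => f u 0 x) 0) 0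
/-- `a₄ = ∂_{vx} f(0,0,0)`. -/
noncomputable def coeffA4 (f : ℝ → ℝ → ℝ → ℝ) : ℝ :=
  deriv (fun v => deriv (fun x => f 0 v x) 0) 0

/-- Coordinate-change invariance of the cubic generic-unfolding condition: for a family
`Φ_{u,v}(x,y) = (β_{u,v}(x,y), y·γ_{u,v}(x,y))` of `C⁴` diffeomorphisms fixing the
`x`-axis, with `Φ_{0,0}(0,0) = (0,0)`, `b = ∂_x β_{0,0}(0,0) ≠ 0`, `c = γ_{0,0}(0,0) ≠ 0`,
the image curves `ỹ_{u,v}(x̃) = y_{u,v}(x)·γ_{u,v}(x, y_{u,v}(x))` (where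
`x̃ = β_{u,v}(x, y_{u,v}(x))` with local inverse `x = δ_{u,v}(x̃)`) satisfy
`∂_u ỹ·∂_{vx̃}ỹ - ∂_v ỹ·∂_{ux̃}ỹ = (c²/b)(a₁a₄ - a₂a₃)` at the origin; hence the
generic condition is preserved. -/
def U3 (f : ℝ → ℝ → ℝ → ℝ) : ℝ × ℝ × ℝ → ℝ := fun p => f p.1 p.2.1 p.2.2
def U2 (g : ℝ × ℝ → ℝ × ℝ → ℝ) : (ℝ × ℝ) × (ℝ × ℝ) → ℝ := fun q => g q.1 q.2
noncomputable def P3 (f : ℝ → ℝ → ℝ → ℝ) : ℝ × ℝ × ℝ → ℝ :=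
  fun p => fderiv ℝ (U3 f) p (0, 0, 1)
noncomputable def Q3 (g : ℝ × ℝ → ℝ × ℝ → ℝ) : (ℝ × ℝ) × (ℝ × ℝ) → ℝ :=
  fun q => fderiv ℝ (U2 g) q ((0, 0), (1, 0))
noncomputable def Q4 (g : ℝ × ℝ → ℝ × ℝ → ℝ) : (ℝ × ℝ) × (ℝ × ℝ) → ℝ :=
  fun q => fderiv ℝ (U2 g) q ((0, 0), (0, 1))

lemma aux_chain' {E : Type*} [NormedAddCommGroup E] [NormedSpace ℝ E]
    {F : E → ℝ} (hF : Differentiable ℝ F) {c : ℝ → E} {c' : E} {t : ℝ} {p : E}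
    (hc : HasDerivAt c c' t) (hp : c t = p) :
    HasDerivAt (fun s => F (c s)) (fderiv ℝ F p c') t := by
  subst hp; exact (hF (c t)).hasFDerivAt.comp_hasDerivAt t hc

lemma aux_diff {E : Type*} [NormedAddCommGroup E] [NormedSpace ℝ E]
    {F : E → ℝ} (hF : ContDiff ℝ 4 F) (v : E) :
    Differentiable ℝ (fun p => fderiv ℝ F p v) :=
  (((hF.fderiv_right (m := 3) (by norm_num)).clm_apply contDiff_const)).differentiable
    (by norm_num)

lemma decomp3 (L : ℝ × ℝ × ℝ →L[ℝ] ℝ) (a b c : ℝ) :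
    L (a, b, c) = a * L (1,0,0) + b * L (0,1,0) + c * L (0,0,1) := by
  have h : (a, b, c) = a • ((1:ℝ),(0:ℝ),(0:ℝ)) + b • ((0:ℝ),(1:ℝ),(0:ℝ))
      + c • ((0:ℝ),(0:ℝ),(1:ℝ)) := by
    simp [Prod.ext_iff]
  rw [h, map_add, map_add, map_smul, map_smul, map_smul]
  simp [smul_eq_mul]

lemma decomp2 (L : (ℝ × ℝ) × (ℝ × ℝ) →L[ℝ] ℝ) (p : ℝ × ℝ) (s t : ℝ) :
    L (p, (s, t)) = p.1 * L ((1,0),(0,0)) + p.2 * L ((0,1),(0,0))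
      + s * L ((0,0),(1,0)) + t * L ((0,0),(0,1)) := by
  have h : (p, (s, t)) = p.1 • (((1:ℝ),(0:ℝ)),((0:ℝ),(0:ℝ)))
      + p.2 • (((0:ℝ),(1:ℝ)),((0:ℝ),(0:ℝ)))
      + s • (((0:ℝ),(0:ℝ)),((1:ℝ),(0:ℝ)))
      + t • (((0:ℝ),(0:ℝ)),((0:ℝ),(1:ℝ))) := by
    simp [Prod.ext_iff]
  rw [h, map_add, map_add, map_add, map_smul, map_smul, map_smul, map_smul]
  simp [smul_eq_mul]

lemma z3 : ((0:ℝ),(0:ℝ),(0:ℝ)) = (0 : ℝ × ℝ × ℝ) := rfl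
lemma z22 : (((0:ℝ),(0:ℝ)),((0:ℝ),(0:ℝ))) = (0 : (ℝ × ℝ) × (ℝ × ℝ)) := rfl

lemma uCase (γ : ℝ × ℝ → ℝ × ℝ → ℝ) (Y δ : ℝ → ℝ → ℝ → ℝ)
    (hγ4 : ContDiff ℝ 4 (U2 γ)) (hY4 : ContDiff ℝ 4 (U3 Y)) (hδ4 : ContDiff ℝ 4 (U3 δ))
    (hY0 : Y 0 0 0 = 0) (hδ0 : δ 0 0 0 = 0)
    (hY1' : P3 Y 0 = 0) (hY2' : fderiv ℝ (P3 Y) 0 (0,0,1) = 0) :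
    coeffA1 (fun u v xt => Y u v (δ u v xt) * γ (u, v) (δ u v xt, Y u v (δ u v xt)))
      = fderiv ℝ (U3 Y) 0 (1,0,0) * γ (0, 0) (0, 0) ∧
    coeffA3 (fun u v xt => Y u v (δ u v xt) * γ (u, v) (δ u v xt, Y u v (δ u v xt)))
      = P3 δ 0 * (γ (0, 0) (0, 0) * fderiv ℝ (P3 Y) 0 (1,0,0)
          + Q3 γ 0 * fderiv ℝ (U3 Y) 0 (1,0,0)) := by
  have hYd : Differentiable ℝ (U3 Y) := hY4.differentiable (by norm_num)
  have hδd : Differentiable ℝ (U3 δ) := hδ4.differentiable (by norm_num)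
  have hγd : Differentiable ℝ (U2 γ) := hγ4.differentiable (by norm_num)
  have hP3Yd : Differentiable ℝ (P3 Y) := aux_diff hY4 _
  have hP3δd : Differentiable ℝ (P3 δ) := aux_diff hδ4 _
  have hQ3γd : Differentiable ℝ (Q3 γ) := aux_diff hγ4 _
  have hQ4γd : Differentiable ℝ (Q4 γ) := aux_diff hγ4 _
  have hY1f : fderiv ℝ (U3 Y) 0 (0,0,1) = 0 := hY1'
  -- the u ↦ (u,0,0) line
  have lineU : HasDerivAt (fun u : ℝ => ((u, 0, 0) : ℝ × ℝ × ℝ)) (1,0,0) 0 :=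
    (hasDerivAt_id 0).prodMk ((hasDerivAt_const 0 (0:ℝ)).prodMk (hasDerivAt_const 0 (0:ℝ)))
  -- u ↦ δ u 0 0
  have hcδ : HasDerivAt (fun u => δ u 0 0) (fderiv ℝ (U3 δ) 0 (1,0,0)) 0 :=
    aux_chain' hδd lineU rfl
  -- the curve φ u = (u,0,δ u 0 0)
  have hφ : HasDerivAt (fun u => ((u, 0, δ u 0 0) : ℝ × ℝ × ℝ))
      (1, 0, fderiv ℝ (U3 δ) 0 (1,0,0)) 0 :=
    (hasDerivAt_id 0).prodMk ((hasDerivAt_const 0 (0:ℝ)).prodMk hcδ)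
  have hφ0 : ((0:ℝ), (0:ℝ), δ 0 0 0) = (0 : ℝ × ℝ × ℝ) := by rw [hδ0]; exact z3
  -- u ↦ Y u 0 (δ u 0 0), derivative a1
  have hFφ : HasDerivAt (fun u => Y u 0 (δ u 0 0)) (fderiv ℝ (U3 Y) 0 (1,0,0)) 0 := by
    have h0 := aux_chain' hYd hφ hφ0
    have hval : fderiv ℝ (U3 Y) 0 (1, 0, fderiv ℝ (U3 δ) 0 (1,0,0))
        = fderiv ℝ (U3 Y) 0 (1,0,0) := by
      rw [decomp3, decomp3, hY1f]; ring
    exact hval ▸ h0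
  -- u ↦ P3 Y (u,0,δ u 0 0), derivative a3
  have hF3φ : HasDerivAt (fun u => P3 Y (u, 0, δ u 0 0)) (fderiv ℝ (P3 Y) 0 (1,0,0)) 0 := by
    have h0 := aux_chain' hP3Yd hφ hφ0
    have hval : fderiv ℝ (P3 Y) 0 (1, 0, fderiv ℝ (U3 δ) 0 (1,0,0))
        = fderiv ℝ (P3 Y) 0 (1,0,0) := by
      rw [decomp3, decomp3, hY2']; ring
    exact hval ▸ h0
  -- u ↦ P3 δ (u,0,0)
  have hDD : HasDerivAt (fun u => P3 δ (u, 0, 0)) (fderiv ℝ (P3 δ) 0 (1,0,0)) 0 :=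
    aux_chain' hP3δd lineU rfl
  -- the curve ψ u = ((u,0),(δ u 0 0, Y u 0 (δ u 0 0)))
  have hψ : HasDerivAt (fun u => (((u, 0), (δ u 0 0, Y u 0 (δ u 0 0)))
        : (ℝ × ℝ) × (ℝ × ℝ)))
      ((1, 0), (fderiv ℝ (U3 δ) 0 (1,0,0), fderiv ℝ (U3 Y) 0 (1,0,0))) 0 :=
    ((hasDerivAt_id 0).prodMk (hasDerivAt_const 0 (0:ℝ))).prodMk (hcδ.prodMk hFφ)
  have hψ0 : (((0:ℝ), (0:ℝ)), (δ 0 0 0, Y 0 0 (δ 0 0 0))) = (0 : (ℝ × ℝ) × (ℝ × ℝ)) := by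
    rw [hδ0, hY0]; exact z22
  have hGψ : HasDerivAt (fun u => γ (u, 0) (δ u 0 0, Y u 0 (δ u 0 0)))
      (fderiv ℝ (U2 γ) 0 ((1, 0), (fderiv ℝ (U3 δ) 0 (1,0,0), fderiv ℝ (U3 Y) 0 (1,0,0)))) 0 :=
    aux_chain' hγd hψ hψ0
  have hG1ψ : HasDerivAt (fun u => Q3 γ ((u, 0), (δ u 0 0, Y u 0 (δ u 0 0))))
      (fderiv ℝ (Q3 γ) 0 ((1, 0), (fderiv ℝ (U3 δ) 0 (1,0,0), fderiv ℝ (U3 Y) 0 (1,0,0)))) 0 :=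
    aux_chain' hQ3γd hψ hψ0
  have hG2ψ : HasDerivAt (fun u => Q4 γ ((u, 0), (δ u 0 0, Y u 0 (δ u 0 0))))
      (fderiv ℝ (Q4 γ) 0 ((1, 0), (fderiv ℝ (U3 δ) 0 (1,0,0), fderiv ℝ (U3 Y) 0 (1,0,0)))) 0 :=
    aux_chain' hQ4γd hψ hψ0
  constructor
  · -- coeffA1
    show deriv (fun u => Y u 0 (δ u 0 0) * γ (u, 0) (δ u 0 0, Y u 0 (δ u 0 0))) 0 = _
    have h := (hFφ.fun_mul hGψ).deriv
    simp only [hδ0, hY0, zero_mul, mul_zero, add_zero, zero_add, z3, z22] at h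
    exact h
  · -- coeffA3
    show deriv (fun u => deriv (fun xt =>
        Y u 0 (δ u 0 xt) * γ (u, 0) (δ u 0 xt, Y u 0 (δ u 0 xt))) 0) 0 = _
    -- Step 1: identify the inner derivative for every u
    have hstep1 : ∀ u : ℝ, deriv (fun xt =>
        Y u 0 (δ u 0 xt) * γ (u, 0) (δ u 0 xt, Y u 0 (δ u 0 xt))) 0
        = P3 δ (u, 0, 0) * P3 Y (u, 0, δ u 0 0)
            * γ (u, 0) (δ u 0 0, Y u 0 (δ u 0 0))
          + Y u 0 (δ u 0 0) *
            (P3 δ (u, 0, 0) * Q3 γ ((u, 0), (δ u 0 0, Y u 0 (δ u 0 0)))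
              + P3 δ (u, 0, 0) * P3 Y (u, 0, δ u 0 0)
                * Q4 γ ((u, 0), (δ u 0 0, Y u 0 (δ u 0 0)))) := by
      intro u
      have hdx : HasDerivAt (fun xt => δ u 0 xt) (P3 δ (u, 0, 0)) 0 :=
        aux_chain' hδd ((hasDerivAt_const 0 u).prodMk
          ((hasDerivAt_const 0 (0:ℝ)).prodMk (hasDerivAt_id 0))) rfl
      have hcx : HasDerivAt (fun xt => ((u, 0, δ u 0 xt) : ℝ × ℝ × ℝ))
          (0, 0, P3 δ (u, 0, 0)) 0 :=
        (hasDerivAt_const 0 u).prodMk ((hasDerivAt_const 0 (0:ℝ)).prodMk hdx)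
      have hyx : HasDerivAt (fun xt => Y u 0 (δ u 0 xt))
          (P3 δ (u, 0, 0) * P3 Y (u, 0, δ u 0 0)) 0 := by
        have h0 := aux_chain' hYd hcx rfl
        have hval : fderiv ℝ (U3 Y) (u, 0, δ u 0 0) (0, 0, P3 δ (u, 0, 0))
            = P3 δ (u, 0, 0) * P3 Y (u, 0, δ u 0 0) := by
          rw [decomp3]; simp [P3]
        exact hval ▸ h0
      have hcx2 : HasDerivAt (fun xt => (((u, 0), (δ u 0 xt, Y u 0 (δ u 0 xt)))
            : (ℝ × ℝ) × (ℝ × ℝ)))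
          ((0, 0), (P3 δ (u, 0, 0), P3 δ (u, 0, 0) * P3 Y (u, 0, δ u 0 0))) 0 :=
        ((hasDerivAt_const 0 u).prodMk (hasDerivAt_const 0 (0:ℝ))).prodMk (hdx.prodMk hyx)
      have hgx : HasDerivAt (fun xt => γ (u, 0) (δ u 0 xt, Y u 0 (δ u 0 xt)))
          (P3 δ (u, 0, 0) * Q3 γ ((u, 0), (δ u 0 0, Y u 0 (δ u 0 0)))
            + P3 δ (u, 0, 0) * P3 Y (u, 0, δ u 0 0)
              * Q4 γ ((u, 0), (δ u 0 0, Y u 0 (δ u 0 0)))) 0 := by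
        have h0 := aux_chain' hγd hcx2 rfl
        have hval : fderiv ℝ (U2 γ) ((u, 0), (δ u 0 0, Y u 0 (δ u 0 0)))
            ((0, 0), (P3 δ (u, 0, 0), P3 δ (u, 0, 0) * P3 Y (u, 0, δ u 0 0)))
            = P3 δ (u, 0, 0) * Q3 γ ((u, 0), (δ u 0 0, Y u 0 (δ u 0 0)))
              + P3 δ (u, 0, 0) * P3 Y (u, 0, δ u 0 0)
                * Q4 γ ((u, 0), (δ u 0 0, Y u 0 (δ u 0 0))) := by
          rw [decomp2]; simp [Q3, Q4]
        exact hval ▸ h0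
      simpa using (hyx.fun_mul hgx).deriv
    rw [funext hstep1]
    have h := (((hDD.fun_mul hF3φ).fun_mul hGψ).fun_add
      (hFφ.fun_mul ((hDD.fun_mul hG1ψ).fun_add ((hDD.fun_mul hF3φ).fun_mul hG2ψ)))).deriv
    simp only [hδ0, hY0, hY1', zero_mul, mul_zero, add_zero, zero_add, z3, z22] at h
    rw [h]; ring

lemma vCase (γ : ℝ × ℝ → ℝ × ℝ → ℝ) (Y δ : ℝ → ℝ → ℝ → ℝ)
    (hγ4 : ContDiff ℝ 4 (U2 γ)) (hY4 : ContDiff ℝ 4 (U3 Y)) (hδ4 : ContDiff ℝ 4 (U3 δ))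
    (hY0 : Y 0 0 0 = 0) (hδ0 : δ 0 0 0 = 0)
    (hY1' : P3 Y 0 = 0) (hY2' : fderiv ℝ (P3 Y) 0 (0,0,1) = 0) :
    coeffA2 (fun u v xt => Y u v (δ u v xt) * γ (u, v) (δ u v xt, Y u v (δ u v xt)))
      = fderiv ℝ (U3 Y) 0 (0,1,0) * γ (0, 0) (0, 0) ∧
    coeffA4 (fun u v xt => Y u v (δ u v xt) * γ (u, v) (δ u v xt, Y u v (δ u v xt)))
      = P3 δ 0 * (γ (0, 0) (0, 0) * fderiv ℝ (P3 Y) 0 (0,1,0)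
          + Q3 γ 0 * fderiv ℝ (U3 Y) 0 (0,1,0)) := by
  have hYd : Differentiable ℝ (U3 Y) := hY4.differentiable (by norm_num)
  have hδd : Differentiable ℝ (U3 δ) := hδ4.differentiable (by norm_num)
  have hγd : Differentiable ℝ (U2 γ) := hγ4.differentiable (by norm_num)
  have hP3Yd : Differentiable ℝ (P3 Y) := aux_diff hY4 _
  have hP3δd : Differentiable ℝ (P3 δ) := aux_diff hδ4 _
  have hQ3γd : Differentiable ℝ (Q3 γ) := aux_diff hγ4 _
  have hQ4γd : Differentiable ℝ (Q4 γ) := aux_diff hγ4 _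
  have hY1f : fderiv ℝ (U3 Y) 0 (0,0,1) = 0 := hY1'
  -- the u ↦ (u,0,0) line
  have lineU : HasDerivAt (fun v : ℝ => ((0, v, 0) : ℝ × ℝ × ℝ)) (0,1,0) 0 :=
    (hasDerivAt_const 0 (0:ℝ)).prodMk ((hasDerivAt_id 0).prodMk (hasDerivAt_const 0 (0:ℝ)))
  -- u ↦ δ u 0 0
  have hcδ : HasDerivAt (fun v => δ 0 v 0) (fderiv ℝ (U3 δ) 0 (0,1,0)) 0 :=
    aux_chain' hδd lineU rfl
  -- the curve φ u = (u,0,δ u 0 0)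
  have hφ : HasDerivAt (fun v => ((0, v, δ 0 v 0) : ℝ × ℝ × ℝ))
      (0, 1, fderiv ℝ (U3 δ) 0 (0,1,0)) 0 :=
    (hasDerivAt_const 0 (0:ℝ)).prodMk ((hasDerivAt_id 0).prodMk hcδ)
  have hφ0 : ((0:ℝ), (0:ℝ), δ 0 0 0) = (0 : ℝ × ℝ × ℝ) := by rw [hδ0]; exact z3
  -- u ↦ Y 0 v (δ 0 v 0), derivative a1
  have hFφ : HasDerivAt (fun v => Y 0 v (δ 0 v 0)) (fderiv ℝ (U3 Y) 0 (0,1,0)) 0 := by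
    have h0 := aux_chain' hYd hφ hφ0
    have hval : fderiv ℝ (U3 Y) 0 (0, 1, fderiv ℝ (U3 δ) 0 (0,1,0))
        = fderiv ℝ (U3 Y) 0 (0,1,0) := by
      rw [decomp3, decomp3, hY1f]; ring
    exact hval ▸ h0
  -- u ↦ P3 Y (u,0,δ u 0 0), derivative a3
  have hF3φ : HasDerivAt (fun v => P3 Y (0, v, δ 0 v 0)) (fderiv ℝ (P3 Y) 0 (0,1,0)) 0 := by
    have h0 := aux_chain' hP3Yd hφ hφ0
    have hval : fderiv ℝ (P3 Y) 0 (0, 1, fderiv ℝ (U3 δ) 0 (0,1,0))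
        = fderiv ℝ (P3 Y) 0 (0,1,0) := by
      rw [decomp3, decomp3, hY2']; ring
    exact hval ▸ h0
  -- u ↦ P3 δ (u,0,0)
  have hDD : HasDerivAt (fun v => P3 δ (0, v, 0)) (fderiv ℝ (P3 δ) 0 (0,1,0)) 0 :=
    aux_chain' hP3δd lineU rfl
  -- the curve ψ u = ((u,0),(δ u 0 0, Y 0 v (δ 0 v 0)))
  have hψ : HasDerivAt (fun v => (((0, v), (δ 0 v 0, Y 0 v (δ 0 v 0)))
        : (ℝ × ℝ) × (ℝ × ℝ)))
      ((0, 1), (fderiv ℝ (U3 δ) 0 (0,1,0), fderiv ℝ (U3 Y) 0 (0,1,0))) 0 :=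
    ((hasDerivAt_const 0 (0:ℝ)).prodMk (hasDerivAt_id 0)).prodMk (hcδ.prodMk hFφ)
  have hψ0 : (((0:ℝ), (0:ℝ)), (δ 0 0 0, Y 0 0 (δ 0 0 0))) = (0 : (ℝ × ℝ) × (ℝ × ℝ)) := by
    rw [hδ0, hY0]; exact z22
  have hGψ : HasDerivAt (fun v => γ (0, v) (δ 0 v 0, Y 0 v (δ 0 v 0)))
      (fderiv ℝ (U2 γ) 0 ((0, 1), (fderiv ℝ (U3 δ) 0 (0,1,0), fderiv ℝ (U3 Y) 0 (0,1,0)))) 0 :=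
    aux_chain' hγd hψ hψ0
  have hG1ψ : HasDerivAt (fun v => Q3 γ ((0, v), (δ 0 v 0, Y 0 v (δ 0 v 0))))
      (fderiv ℝ (Q3 γ) 0 ((0, 1), (fderiv ℝ (U3 δ) 0 (0,1,0), fderiv ℝ (U3 Y) 0 (0,1,0)))) 0 :=
    aux_chain' hQ3γd hψ hψ0
  have hG2ψ : HasDerivAt (fun v => Q4 γ ((0, v), (δ 0 v 0, Y 0 v (δ 0 v 0))))
      (fderiv ℝ (Q4 γ) 0 ((0, 1), (fderiv ℝ (U3 δ) 0 (0,1,0), fderiv ℝ (U3 Y) 0 (0,1,0)))) 0 :=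
    aux_chain' hQ4γd hψ hψ0
  constructor
  · -- coeffA1
    show deriv (fun v => Y 0 v (δ 0 v 0) * γ (0, v) (δ 0 v 0, Y 0 v (δ 0 v 0))) 0 = _
    have h := (hFφ.fun_mul hGψ).deriv
    simp only [hδ0, hY0, zero_mul, mul_zero, add_zero, zero_add, z3, z22] at h
    exact h
  · -- coeffA3
    show deriv (fun v => deriv (fun xt =>
        Y 0 v (δ 0 v xt) * γ (0, v) (δ 0 v xt, Y 0 v (δ 0 v xt))) 0) 0 = _
    -- Step 1: identify the inner derivative for every u
    have hstep1 : ∀ v : ℝ, deriv (fun xt =>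
        Y 0 v (δ 0 v xt) * γ (0, v) (δ 0 v xt, Y 0 v (δ 0 v xt))) 0
        = P3 δ (0, v, 0) * P3 Y (0, v, δ 0 v 0)
            * γ (0, v) (δ 0 v 0, Y 0 v (δ 0 v 0))
          + Y 0 v (δ 0 v 0) *
            (P3 δ (0, v, 0) * Q3 γ ((0, v), (δ 0 v 0, Y 0 v (δ 0 v 0)))
              + P3 δ (0, v, 0) * P3 Y (0, v, δ 0 v 0)
                * Q4 γ ((0, v), (δ 0 v 0, Y 0 v (δ 0 v 0)))) := by
      intro v
      have hdx : HasDerivAt (fun xt => δ 0 v xt) (P3 δ (0, v, 0)) 0 :=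
        aux_chain' hδd ((hasDerivAt_const 0 (0:ℝ)).prodMk
          ((hasDerivAt_const 0 v).prodMk (hasDerivAt_id 0))) rfl
      have hcx : HasDerivAt (fun xt => ((0, v, δ 0 v xt) : ℝ × ℝ × ℝ))
          (0, 0, P3 δ (0, v, 0)) 0 :=
        (hasDerivAt_const 0 (0:ℝ)).prodMk ((hasDerivAt_const 0 v).prodMk hdx)
      have hyx : HasDerivAt (fun xt => Y 0 v (δ 0 v xt))
          (P3 δ (0, v, 0) * P3 Y (0, v, δ 0 v 0)) 0 := by
        have h0 := aux_chain' hYd hcx rfl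
        have hval : fderiv ℝ (U3 Y) (0, v, δ 0 v 0) (0, 0, P3 δ (0, v, 0))
            = P3 δ (0, v, 0) * P3 Y (0, v, δ 0 v 0) := by
          rw [decomp3]; simp [P3]
        exact hval ▸ h0
      have hcx2 : HasDerivAt (fun xt => (((0, v), (δ 0 v xt, Y 0 v (δ 0 v xt)))
            : (ℝ × ℝ) × (ℝ × ℝ)))
          ((0, 0), (P3 δ (0, v, 0), P3 δ (0, v, 0) * P3 Y (0, v, δ 0 v 0))) 0 :=
        ((hasDerivAt_const 0 (0:ℝ)).prodMk (hasDerivAt_const 0 v)).prodMk (hdx.prodMk hyx)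
      have hgx : HasDerivAt (fun xt => γ (0, v) (δ 0 v xt, Y 0 v (δ 0 v xt)))
          (P3 δ (0, v, 0) * Q3 γ ((0, v), (δ 0 v 0, Y 0 v (δ 0 v 0)))
            + P3 δ (0, v, 0) * P3 Y (0, v, δ 0 v 0)
              * Q4 γ ((0, v), (δ 0 v 0, Y 0 v (δ 0 v 0)))) 0 := by
        have h0 := aux_chain' hγd hcx2 rfl
        have hval : fderiv ℝ (U2 γ) ((0, v), (δ 0 v 0, Y 0 v (δ 0 v 0)))
            ((0, 0), (P3 δ (0, v, 0), P3 δ (0, v, 0) * P3 Y (0, v, δ 0 v 0)))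
            = P3 δ (0, v, 0) * Q3 γ ((0, v), (δ 0 v 0, Y 0 v (δ 0 v 0)))
              + P3 δ (0, v, 0) * P3 Y (0, v, δ 0 v 0)
                * Q4 γ ((0, v), (δ 0 v 0, Y 0 v (δ 0 v 0))) := by
          rw [decomp2]; simp [Q3, Q4]
        exact hval ▸ h0
      simpa using (hyx.fun_mul hgx).deriv
    rw [funext hstep1]
    have h := (((hDD.fun_mul hF3φ).fun_mul hGψ).fun_add
      (hFφ.fun_mul ((hDD.fun_mul hG1ψ).fun_add ((hDD.fun_mul hF3φ).fun_mul hG2ψ)))).deriv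
    simp only [hδ0, hY0, hY1', zero_mul, mul_zero, add_zero, zero_add, z3, z22] at h
    rw [h]; ring

theorem cubic_generic_unfolding_coord_change
    (β γ : ℝ × ℝ → ℝ × ℝ → ℝ) (Y δ : ℝ → ℝ → ℝ → ℝ)
    (hβ : ContDiff ℝ 4 (fun q : (ℝ × ℝ) × (ℝ × ℝ) => β q.1 q.2))
    (hγ : ContDiff ℝ 4 (fun q : (ℝ × ℝ) × (ℝ × ℝ) => γ q.1 q.2))
    (hY : ContDiff ℝ 4 (fun p : ℝ × ℝ × ℝ => Y p.1 p.2.1 p.2.2))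
    (hδ : ContDiff ℝ 4 (fun p : ℝ × ℝ × ℝ => δ p.1 p.2.1 p.2.2))
    (hβ0 : β (0, 0) (0, 0) = 0)
    (hb : deriv (fun x => β (0, 0) (x, 0)) 0 ≠ 0)
    (hc : γ (0, 0) (0, 0) ≠ 0)
    (hY0 : Y 0 0 0 = 0)
    (hY1 : deriv (fun x => Y 0 0 x) 0 = 0)
    (hY2 : deriv (deriv (fun x => Y 0 0 x)) 0 = 0)
    (hδ0 : δ 0 0 0 = 0)
    (hinv1 : ∀ᶠ p : ℝ × ℝ × ℝ in 𝓝 0,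
      δ p.1 p.2.1 (β (p.1, p.2.1) (p.2.2, Y p.1 p.2.1 p.2.2)) = p.2.2)
    (hinv2 : ∀ᶠ p : ℝ × ℝ × ℝ in 𝓝 0,
      β (p.1, p.2.1) (δ p.1 p.2.1 p.2.2, Y p.1 p.2.1 (δ p.1 p.2.1 p.2.2)) = p.2.2) :
    (coeffA1 (fun u v xt => Y u v (δ u v xt) * γ (u, v) (δ u v xt, Y u v (δ u v xt))) *
       coeffA4 (fun u v xt => Y u v (δ u v xt) * γ (u, v) (δ u v xt, Y u v (δ u v xt))) -
     coeffA2 (fun u v xt => Y u v (δ u v xt) * γ (u, v) (δ u v xt, Y u v (δ u v xt))) *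
       coeffA3 (fun u v xt => Y u v (δ u v xt) * γ (u, v) (δ u v xt, Y u v (δ u v xt))))
      = (γ (0, 0) (0, 0)) ^ 2 / deriv (fun x => β (0, 0) (x, 0)) 0 *
          (coeffA1 Y * coeffA4 Y - coeffA2 Y * coeffA3 Y) ∧
    ((coeffA1 Y * coeffA4 Y - coeffA2 Y * coeffA3 Y ≠ 0) ↔
      (coeffA1 (fun u v xt => Y u v (δ u v xt) * γ (u, v) (δ u v xt, Y u v (δ u v xt))) *
         coeffA4 (fun u v xt => Y u v (δ u v xt) * γ (u, v) (δ u v xt, Y u v (δ u v xt))) -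
       coeffA2 (fun u v xt => Y u v (δ u v xt) * γ (u, v) (δ u v xt, Y u v (δ u v xt))) *
         coeffA3 (fun u v xt => Y u v (δ u v xt) * γ (u, v) (δ u v xt, Y u v (δ u v xt))) ≠ 0)) := by
  classical
  have hY4 : ContDiff ℝ 4 (U3 Y) := hY
  have hδ4 : ContDiff ℝ 4 (U3 δ) := hδ
  have hγ4 : ContDiff ℝ 4 (U2 γ) := hγ
  have hβ4 : ContDiff ℝ 4 (U2 β) := hβ
  have hYd : Differentiable ℝ (U3 Y) := hY4.differentiable (by norm_num)
  have hδd : Differentiable ℝ (U3 δ) := hδ4.differentiable (by norm_num)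
  have hβd : Differentiable ℝ (U2 β) := hβ4.differentiable (by norm_num)
  have hP3Yd : Differentiable ℝ (P3 Y) := aux_diff hY4 _
  -- inner x-derivatives of Y are given by P3
  have hin : ∀ u v x : ℝ, deriv (fun t => Y u v t) x = P3 Y (u, v, x) := fun u v x =>
    (aux_chain' hYd ((hasDerivAt_const x u).prodMk
      ((hasDerivAt_const x v).prodMk (hasDerivAt_id x))) rfl).deriv
  -- translate hY1
  have hY1' : P3 Y 0 = 0 := by
    have := hin 0 0 0
    rw [hY1] at this; exact this.symm
  -- translate hY2
  have hY2' : fderiv ℝ (P3 Y) 0 (0, 0, 1) = 0 := by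
    have he : deriv (fun x => Y 0 0 x) = fun x => P3 Y (0, 0, x) := funext fun x => hin 0 0 x
    rw [he] at hY2
    have h2 : HasDerivAt (fun x => P3 Y (0, 0, x)) (fderiv ℝ (P3 Y) 0 (0, 0, 1)) 0 :=
      aux_chain' hP3Yd ((hasDerivAt_const 0 (0:ℝ)).prodMk
        ((hasDerivAt_const 0 (0:ℝ)).prodMk (hasDerivAt_id 0))) rfl
    rw [← h2.deriv]; exact hY2
  -- the coefficients of Y in fderiv form
  have hA1Y : coeffA1 Y = fderiv ℝ (U3 Y) 0 (1, 0, 0) :=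
    (aux_chain' hYd ((hasDerivAt_id 0).prodMk
      ((hasDerivAt_const 0 (0:ℝ)).prodMk (hasDerivAt_const 0 (0:ℝ)))) rfl).deriv
  have hA2Y : coeffA2 Y = fderiv ℝ (U3 Y) 0 (0, 1, 0) :=
    (aux_chain' hYd ((hasDerivAt_const 0 (0:ℝ)).prodMk
      ((hasDerivAt_id 0).prodMk (hasDerivAt_const 0 (0:ℝ)))) rfl).deriv
  have hA3Y : coeffA3 Y = fderiv ℝ (P3 Y) 0 (1, 0, 0) := by
    show deriv (fun u => deriv (fun x => Y u 0 x) 0) 0 = _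
    rw [funext fun u => hin u 0 0]
    exact (aux_chain' hP3Yd ((hasDerivAt_id 0).prodMk
      ((hasDerivAt_const 0 (0:ℝ)).prodMk (hasDerivAt_const 0 (0:ℝ)))) rfl).deriv
  have hA4Y : coeffA4 Y = fderiv ℝ (P3 Y) 0 (0, 1, 0) := by
    show deriv (fun v => deriv (fun x => Y 0 v x) 0) 0 = _
    rw [funext fun v => hin 0 v 0]
    exact (aux_chain' hP3Yd ((hasDerivAt_const 0 (0:ℝ)).prodMk
      ((hasDerivAt_id 0).prodMk (hasDerivAt_const 0 (0:ℝ)))) rfl).deriv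
  -- the value b as a full derivative
  have hbval : deriv (fun x => β (0, 0) (x, 0)) 0 = fderiv ℝ (U2 β) 0 ((0, 0), (1, 0)) :=
    (aux_chain' hβd (((hasDerivAt_const 0 (0:ℝ)).prodMk (hasDerivAt_const 0 (0:ℝ))).prodMk
      ((hasDerivAt_id 0).prodMk (hasDerivAt_const 0 (0:ℝ)))) rfl).deriv
  -- the inverse-function fact: b * d3 = 1
  have hbd3 : fderiv ℝ (U2 β) 0 ((0, 0), (1, 0)) * P3 δ 0 = 1 := by
    have htend : Filter.Tendsto (fun x : ℝ => (((0:ℝ), (0:ℝ), x) : ℝ × ℝ × ℝ))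
        (nhds 0) (nhds 0) := by
      apply Continuous.tendsto'
      · exact continuous_const.prodMk (continuous_const.prodMk continuous_id)
      · rfl
    have hline : ∀ᶠ x : ℝ in nhds 0, δ 0 0 (β (0, 0) (x, Y 0 0 x)) = x := htend.eventually hinv1
    -- derivative of x ↦ Y 0 0 x at 0 is 0
    have hY1d : HasDerivAt (fun x => Y 0 0 x) 0 0 := by
      have h0 : HasDerivAt (fun x => Y 0 0 x) (P3 Y 0) 0 :=
        aux_chain' hYd ((hasDerivAt_const 0 (0:ℝ)).prodMk
          ((hasDerivAt_const 0 (0:ℝ)).prodMk (hasDerivAt_id 0))) rfl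
      rwa [hY1'] at h0
    -- derivative of x ↦ β (0,0) (x, Y 0 0 x) at 0
    have hβx : HasDerivAt (fun x => β (0, 0) (x, Y 0 0 x))
        (fderiv ℝ (U2 β) 0 ((0, 0), (1, 0))) 0 := by
      have hc : HasDerivAt (fun x => ((((0:ℝ), (0:ℝ)), (x, Y 0 0 x)) : (ℝ × ℝ) × (ℝ × ℝ)))
          ((0, 0), (1, 0)) 0 :=
        ((hasDerivAt_const 0 (0:ℝ)).prodMk (hasDerivAt_const 0 (0:ℝ))).prodMk
          ((hasDerivAt_id 0).prodMk hY1d)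
      have hp : ((((0:ℝ), (0:ℝ)), ((0:ℝ), Y 0 0 0)) : (ℝ × ℝ) × (ℝ × ℝ)) = 0 := by
        rw [hY0]; exact z22
      exact aux_chain' hβd hc hp
    -- derivative of the composite
    have hcomp : HasDerivAt (fun x => δ 0 0 (β (0, 0) (x, Y 0 0 x)))
        (fderiv ℝ (U2 β) 0 ((0, 0), (1, 0)) * P3 δ 0) 0 := by
      have hc : HasDerivAt (fun x => (((0:ℝ), (0:ℝ), β (0, 0) (x, Y 0 0 x)) : ℝ × ℝ × ℝ))
          (0, 0, fderiv ℝ (U2 β) 0 ((0, 0), (1, 0))) 0 :=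
        (hasDerivAt_const 0 (0:ℝ)).prodMk ((hasDerivAt_const 0 (0:ℝ)).prodMk hβx)
      have hp : (((0:ℝ), (0:ℝ), β (0, 0) ((0:ℝ), Y 0 0 0)) : ℝ × ℝ × ℝ) = 0 := by
        rw [hY0, hβ0]; exact z3
      have h0 := aux_chain' hδd hc hp
      have hval : fderiv ℝ (U3 δ) 0 (0, 0, fderiv ℝ (U2 β) 0 ((0, 0), (1, 0)))
          = fderiv ℝ (U2 β) 0 ((0, 0), (1, 0)) * P3 δ 0 := by
        rw [decomp3]; simp [P3]
      exact hval ▸ h0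
    have h1 : deriv (fun x => δ 0 0 (β (0, 0) (x, Y 0 0 x))) 0 = deriv (fun x : ℝ => x) 0 :=
      Filter.EventuallyEq.deriv_eq hline
    rw [hcomp.deriv, deriv_id''] at h1
    exact h1
  obtain ⟨h1, h3⟩ := uCase γ Y δ hγ4 hY4 hδ4 hY0 hδ0 hY1' hY2'
  obtain ⟨h2, h4⟩ := vCase γ Y δ hγ4 hY4 hδ4 hY0 hδ0 hY1' hY2'
  rw [hbval] at hb ⊢
  rw [h1, h2, h3, h4, hA1Y, hA2Y, hA3Y, hA4Y]
  set A1 := fderiv ℝ (U3 Y) 0 ((1:ℝ), (0:ℝ), (0:ℝ)) with hA1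
  set A2 := fderiv ℝ (U3 Y) 0 ((0:ℝ), (1:ℝ), (0:ℝ)) with hA2
  set A3 := fderiv ℝ (P3 Y) 0 ((1:ℝ), (0:ℝ), (0:ℝ)) with hA3
  set A4 := fderiv ℝ (P3 Y) 0 ((0:ℝ), (1:ℝ), (0:ℝ)) with hA4
  set c := γ (0, 0) (0, 0) with hcdef
  set g := Q3 γ 0 with hgdef
  set d3 := P3 δ 0 with hd3def
  set b := fderiv ℝ (U2 β) 0 (((0:ℝ), (0:ℝ)), ((1:ℝ), (0:ℝ))) with hbdef
  have hd3 : d3 = 1 / b := by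
    rw [eq_div_iff hb]
    linarith [hbd3]
  have heq : A1 * c * (d3 * (c * A4 + g * A2)) - A2 * c * (d3 * (c * A3 + g * A1))
      = c ^ 2 / b * (A1 * A4 - A2 * A3) := by
    rw [hd3]; field_simp; ring
  refine ⟨heq, ?_⟩
  rw [heq]
  have hcb : c ^ 2 / b ≠ 0 := div_ne_zero (pow_ne_zero 2 hc) hb
  constructor
  · intro h; exact mul_ne_zero hcb h
  · intro h h0; exact h (by rw [h0, mul_zero])
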